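/- Let (W₁, U₁), …, (W_n, U_n) be independent and identically distributed pairs of random variables, and suppose there exist K > 0 and r ≥ 1 such that for every t ≥ 0, the conditional tail bound E[1_{|U₁| > t} | W₁] ≤ exp(1 − (t/K)^r) holds almost surely. Let B be a measurable function with 0 ≤ B ≤ 1 and E[B(W₁)²] ≤ c for some c > 0. Then there exist positive constants b₁ and b₂, depending only on K and r, such that for every δ > 0, P( | Σ_{i=1}^n ( B(W_i)U_i − E[B(W₁)U₁] ) | ≥ δ ) ≤ 2·exp( − δ² / (b₁·c·n + b₂·δ) ). (Core concentration bound of Lemma 5, with the B-spline basis function abstracted to a bounded function B.) -/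

import Mathlib

set_option maxHeartbeats 1000000

open MeasureTheory ProbabilityTheory
open Real Set


lemma exp_le_one_add_add (x : ℝ) : Real.exp x ≤ 1 + x + x^2/2 * Real.exp |x| := by
  have hsum : ∀ y : ℝ, Summable (fun n : ℕ => y ^ n / (Nat.factorial n : ℝ)) := fun y =>
    Real.summable_pow_div_factorial y
  have hexp : ∀ y : ℝ, Real.exp y = ∑' n : ℕ, y ^ n / (Nat.factorial n : ℝ) := by
    intro y
    rw [Real.exp_eq_exp_ℝ, NormedSpace.exp_eq_tsum_div]
  have hsum2 : Summable (fun n : ℕ => x ^ (n+2) / (Nat.factorial (n+2) : ℝ)) :=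
    (hsum x).comp_injective (add_left_injective 2)
  have hsumabs : Summable (fun n : ℕ => |x| ^ (n+2) / (Nat.factorial (n+2) : ℝ)) :=
    (hsum |x|).comp_injective (add_left_injective 2)
  have key : ∑ i ∈ Finset.range 2, x ^ i / (Nat.factorial i : ℝ)
      + ∑' n : ℕ, x ^ (n+2) / (Nat.factorial (n+2) : ℝ)
      = ∑' n : ℕ, x ^ n / (Nat.factorial n : ℝ) := Summable.sum_add_tsum_nat_add 2 (hsum x)
  have hR : |∑' n : ℕ, x ^ (n+2) / (Nat.factorial (n+2) : ℝ)| ≤ x^2/2 * Real.exp |x| := by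
    have h1 : |∑' n : ℕ, x ^ (n+2) / (Nat.factorial (n+2) : ℝ)|
        ≤ ∑' n : ℕ, |x| ^ (n+2) / (Nat.factorial (n+2) : ℝ) := by
      have hnrm : Summable fun n : ℕ => ‖x ^ (n+2) / (Nat.factorial (n+2) : ℝ)‖ := by
        refine hsumabs.congr fun n => ?_
        rw [Real.norm_eq_abs, abs_div, abs_pow, abs_of_nonneg (a := ((Nat.factorial (n+2)):ℝ)) (by positivity)]
      refine (norm_tsum_le_tsum_norm hnrm).trans_eq ?_
      refine tsum_congr fun n => ?_
      rw [Real.norm_eq_abs, abs_div, abs_pow, abs_of_nonneg (a := ((Nat.factorial (n+2)):ℝ)) (by positivity)]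
    refine h1.trans ?_
    have h2 : ∀ n : ℕ, |x| ^ (n+2) / (Nat.factorial (n+2) : ℝ)
        ≤ x^2/2 * (|x| ^ n / (Nat.factorial n : ℝ)) := by
      intro n
      have hfac : (2 : ℝ) * (Nat.factorial n : ℝ) ≤ (Nat.factorial (n+2) : ℝ) := by
        have : 2 * Nat.factorial n ≤ Nat.factorial (n+2) := by
          rw [Nat.factorial_succ, Nat.factorial_succ]
          calc 2 * Nat.factorial n ≤ (n+1+1) * Nat.factorial n :=
                Nat.mul_le_mul_right _ (by omega)
            _ ≤ (n+1+1) * ((n+1) * Nat.factorial n) :=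
                Nat.mul_le_mul_left _ (Nat.le_mul_of_pos_left _ (by omega))
        exact_mod_cast this
      have hx2 : |x| ^ (n+2) = x^2 * |x|^n := by
        rw [pow_add, mul_comm, sq_abs]
      have h3 : x^2 * |x|^n / (Nat.factorial (n+2) : ℝ) ≤ x^2 * |x|^n / (2 * (Nat.factorial n : ℝ)) :=
        div_le_div_of_nonneg_left (by positivity) (by positivity) hfac
      rw [hx2]
      refine h3.trans_eq ?_
      field_simp
    calc (∑' n : ℕ, |x| ^ (n+2) / (Nat.factorial (n+2) : ℝ))
        ≤ ∑' n : ℕ, x^2/2 * (|x| ^ n / (Nat.factorial n : ℝ)) :=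
          Summable.tsum_le_tsum h2 hsumabs ((hsum |x|).mul_left _)
      _ = x^2/2 * ∑' n : ℕ, |x| ^ n / (Nat.factorial n : ℝ) := tsum_mul_left
      _ = x^2/2 * Real.exp |x| := by rw [hexp]
  have hx : Real.exp x = 1 + x + ∑' n : ℕ, x ^ (n+2) / (Nat.factorial (n+2) : ℝ) := by
    rw [hexp, ← key]
    simp [Finset.sum_range_succ]
  rw [hx]
  have := (abs_le.mp hR).2
  linarith

lemma integrable_and_integral_le {Ω : Type} [MeasurableSpace Ω] {μ : Measure Ω}
    {f : Ω → ℝ} (hf : AEStronglyMeasurable f μ) (hf0 : 0 ≤ᵐ[μ] f) {r : ℝ} (h0r : 0 ≤ r)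
    (h : ∫⁻ ω, ENNReal.ofReal (f ω) ∂μ ≤ ENNReal.ofReal r) :
    Integrable f μ ∧ ∫ ω, f ω ∂μ ≤ r := by
  have hfin : HasFiniteIntegral f μ := by
    rw [hasFiniteIntegral_iff_ofReal hf0]
    exact lt_of_le_of_lt h ENNReal.ofReal_lt_top
  refine ⟨⟨hf, hfin⟩, ?_⟩
  rw [integral_eq_lintegral_of_nonneg_ae hf0 hf]
  calc (∫⁻ ω, ENNReal.ofReal (f ω) ∂μ).toReal ≤ (ENNReal.ofReal r).toReal :=
        ENNReal.toReal_mono ENNReal.ofReal_ne_top h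
    _ = r := ENNReal.toReal_ofReal h0r

/-- Layer-cake style bound from an exponential tail. -/
lemma layercake_exp_tail_bound {Ω : Type} [MeasurableSpace Ω] (ν : Measure Ω)
    {f : Ω → ℝ} (hf : Measurable f) (hf0 : ∀ ω, 0 ≤ f ω) {C a : ℝ} (hC : 0 ≤ C)
    (ha : 0 < a)
    (htail : ∀ t : ℝ, 0 < t → ν {ω | t < f ω} ≤ ENNReal.ofReal (C * Real.exp (-(a * t))))
    {g : ℝ → ℝ} (hg : Continuous g) (hgnn : ∀ t, 0 ≤ t → 0 ≤ g t)
    (hgi : IntegrableOn (fun t => g t * Real.exp (-(a * t))) (Set.Ioi 0)) :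
    ∫⁻ ω, ENNReal.ofReal (∫ τ in (0:ℝ)..(f ω), g τ) ∂ν
      ≤ ENNReal.ofReal (C * ∫ t in Set.Ioi (0:ℝ), g t * Real.exp (-(a * t))) := by
  rw [lintegral_comp_eq_lintegral_meas_lt_mul ν (Filter.Eventually.of_forall hf0) hf.aemeasurable
    (fun t _ => hg.intervalIntegrable _ _)
    ((ae_restrict_iff' measurableSet_Ioi).mpr (Filter.Eventually.of_forall fun t ht => hgnn t (le_of_lt ht)))]
  calc ∫⁻ t in Set.Ioi (0:ℝ), ν {a : Ω | t < f a} * ENNReal.ofReal (g t)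
      ≤ ∫⁻ t in Set.Ioi (0:ℝ), ENNReal.ofReal ((C * Real.exp (-(a * t))) * g t) := by
        refine lintegral_mono_ae ?_
        filter_upwards [self_mem_ae_restrict measurableSet_Ioi] with t ht
        rw [ENNReal.ofReal_mul (by positivity)]
        exact mul_le_mul_left (htail t ht) _
    _ = ENNReal.ofReal (∫ t in Set.Ioi (0:ℝ), (C * Real.exp (-(a * t))) * g t) := by
        refine (ofReal_integral_eq_lintegral_ofReal ?_ ?_).symm
        · have : (fun t => C * Real.exp (-(a * t)) * g t)
              = fun t => C * (g t * Real.exp (-(a * t))) := by funext t; ring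
          rw [this]
          exact hgi.const_mul C
        · refine (ae_restrict_iff' measurableSet_Ioi).mpr (Filter.Eventually.of_forall fun t ht => ?_)
          have := hgnn t (le_of_lt ht)
          positivity
    _ = ENNReal.ofReal (C * ∫ t in Set.Ioi (0:ℝ), g t * Real.exp (-(a * t))) := by
        congr 1
        rw [← integral_const_mul]
        congr 1; funext t; ring

lemma exp_decay_int (p : ℝ) (hp : 0 < p) (m : ℕ) :
    IntegrableOn (fun t : ℝ => t ^ m * Real.exp (-(p*t))) (Set.Ioi 0)
    ∧ ∫ t in Set.Ioi (0:ℝ), t ^ m * Real.exp (-(p*t))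
        = (Nat.factorial m : ℝ) / p ^ (m+1) := by
  have hm : (-1:ℝ) < m := by
    have : (0:ℝ) ≤ m := Nat.cast_nonneg m
    linarith
  constructor
  · have h := integrableOn_rpow_mul_exp_neg_mul_rpow (p := 1) (s := (m:ℝ)) (b := p)
      hm zero_lt_one hp
    refine h.congr_fun (fun x hx => ?_) measurableSet_Ioi
    beta_reduce
    rw [Real.rpow_natCast, Real.rpow_one, neg_mul]
  · have h := Real.integral_rpow_mul_exp_neg_mul_Ioi (a := (m:ℝ)+1) (r := p)
      (by positivity) hp
    have heq : ∀ x ∈ Set.Ioi (0:ℝ), x ^ ((m:ℝ)+1-1) * Real.exp (-(p*x))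
        = x ^ m * Real.exp (-(p*x)) := by
      intro x hx
      rw [add_sub_cancel_right, Real.rpow_natCast]
    rw [setIntegral_congr_fun measurableSet_Ioi heq] at h
    rw [h, Real.Gamma_nat_eq_factorial]
    have : ((m:ℝ)+1) = ((m+1 : ℕ) : ℝ) := by push_cast; ring
    rw [this, Real.rpow_natCast, div_pow, one_pow]
    ring

lemma ftc_exp (s x : ℝ) :
    ∫ τ in (0:ℝ)..x, s * Real.exp (s*τ) = Real.exp (s*x) - 1 := by
  have h : ∀ τ ∈ Set.uIcc 0 x, HasDerivAt (fun τ => Real.exp (s*τ)) (s * Real.exp (s*τ)) τ := by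
    intro τ _
    simpa [mul_comm, Function.comp_def] using ((Real.hasDerivAt_exp (s*τ)).comp τ ((hasDerivAt_id τ).const_mul s))
  rw [intervalIntegral.integral_eq_sub_of_hasDerivAt h
    ((Continuous.intervalIntegrable (by continuity) 0 x))]
  simp

lemma ftc_sq_exp (s x : ℝ) :
    ∫ τ in (0:ℝ)..x, (2*τ + s*τ^2) * Real.exp (s*τ) = x^2 * Real.exp (s*x) := by
  have h : ∀ τ ∈ Set.uIcc 0 x, HasDerivAt (fun τ => τ^2 * Real.exp (s*τ))
      ((2*τ + s*τ^2) * Real.exp (s*τ)) τ := by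
    intro τ _
    have h1 : HasDerivAt (fun τ : ℝ => τ^2) (2*τ) τ := by
      simpa using (hasDerivAt_pow 2 τ)
    have h2 : HasDerivAt (fun τ => Real.exp (s*τ)) (s * Real.exp (s*τ)) τ := by
      simpa [mul_comm, Function.comp_def] using ((Real.hasDerivAt_exp (s*τ)).comp τ ((hasDerivAt_id τ).const_mul s))
    have : HasDerivAt (fun τ => τ^2 * Real.exp (s*τ))
        (2 * τ * Real.exp (s * τ) + τ ^ 2 * (s * Real.exp (s * τ))) τ := h1.mul h2
    convert this using 1
    ring
  rw [intervalIntegral.integral_eq_sub_of_hasDerivAt h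
    ((Continuous.intervalIntegrable (by continuity) 0 x))]
  simp

/-- The sub-σ-algebra generated by the first coordinate. -/
def mW {Ω : Type} (X : Ω → ℝ × ℝ) : MeasurableSpace Ω :=
  MeasurableSpace.comap (fun ω => (X ω).1) inferInstance

/-- Weighted tail bound from the conditional tail hypothesis. -/
lemma weighted_tail {Ω : Type} [m0 : MeasurableSpace Ω] (μ : Measure Ω)
    [IsProbabilityMeasure μ] (X : Ω → ℝ × ℝ) (hX : Measurable X)
    {K r : ℝ} (hK : 0 < K) (hr : 1 ≤ r)
    (htail : ∀ t : ℝ, 0 ≤ t →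
      μ[Set.indicator {ω | t < |(X ω).2|} (fun _ => (1 : ℝ)) |
          MeasurableSpace.comap (fun ω => (X ω).1) inferInstance] ≤ᵐ[μ]
        fun _ => Real.exp (1 - (t / K) ^ r))
    {g : Ω → ℝ}
    (hg : StronglyMeasurable[mW X] g)
    (hg0 : ∀ ω, 0 ≤ g ω) (hg1 : ∀ ω, g ω ≤ 1) {c' : ℝ} (hgc : ∫ ω, g ω ∂μ ≤ c') :
    ∀ t : ℝ, 0 < t →
      ∫ ω, g ω * Set.indicator {ω | t < |(X ω).2|} (fun _ => (1 : ℝ)) ω ∂μ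
        ≤ c' * Real.exp 2 * Real.exp (-(1/K * t)) := by
  intro t ht
  have hm : mW X ≤ m0 := hX.fst.comap_le
  have hmeq : mW X = MeasurableSpace.comap (fun ω => (X ω).1) inferInstance := rfl
  have hS : MeasurableSet {ω | t < |(X ω).2|} :=
    measurableSet_lt measurable_const hX.snd.abs
  set ind : Ω → ℝ := Set.indicator {ω | t < |(X ω).2|} (fun _ => (1 : ℝ)) with hinddef
  have hind_meas : Measurable ind := (measurable_const (a := (1:ℝ))).indicator hS
  have hind_int : Integrable ind μ := (integrable_const (1:ℝ)).indicator hS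
  have hind_bd : ∀ ω, ‖ind ω‖ ≤ 1 := by
    intro ω
    rw [Real.norm_eq_abs]
    by_cases h : ω ∈ {ω | t < |(X ω).2|} <;> simp [hinddef, Set.indicator_apply, h]
  have hg_int : Integrable g μ := by
    refine (integrable_const (1:ℝ)).mono' ((hg.mono hm).aestronglyMeasurable) ?_
    exact Filter.Eventually.of_forall fun ω => by
      rw [Real.norm_eq_abs, abs_of_nonneg (hg0 ω)]; exact hg1 ω
  have hgind_int : Integrable (g * ind) μ := by
    refine hg_int.mono' (((hg.mono hm).mul (hind_meas.stronglyMeasurable : StronglyMeasurable ind)).aestronglyMeasurable) ?_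
    refine Filter.Eventually.of_forall fun ω => ?_
    rw [Pi.mul_apply, Real.norm_eq_abs, abs_mul, abs_of_nonneg (hg0 ω)]
    calc g ω * |ind ω| ≤ g ω * 1 := by
          refine mul_le_mul_of_nonneg_left ?_ (hg0 ω)
          simpa [Real.norm_eq_abs] using hind_bd ω
      _ = g ω := mul_one _
  have hpull : μ[g * ind | mW X] =ᵐ[μ] g * μ[ind | mW X] :=
    condExp_stronglyMeasurable_mul_of_bound hm hg hind_int 1
      (Filter.Eventually.of_forall fun ω => by
        rw [Real.norm_eq_abs, abs_of_nonneg (hg0 ω)]; exact hg1 ω)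
  have hcond_int : Integrable (g * μ[ind | mW X]) μ := by
    refine integrable_condExp.bdd_mul (c := 1) ((hg.mono hm).aestronglyMeasurable)
      (Filter.Eventually.of_forall fun ω => ?_)
    rw [Real.norm_eq_abs, abs_of_nonneg (hg0 ω)]; exact hg1 ω
  have step1 : ∫ ω, g ω * ind ω ∂μ = ∫ ω, (g * μ[ind | mW X]) ω ∂μ := by
    have h1 : ∫ ω, (g * ind) ω ∂μ = ∫ ω, (μ[g * ind | mW X]) ω ∂μ :=
      (integral_condExp hm).symm
    calc ∫ ω, g ω * ind ω ∂μ = ∫ ω, (g * ind) ω ∂μ := rfl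
      _ = ∫ ω, (μ[g * ind | mW X]) ω ∂μ := h1
      _ = ∫ ω, (g * μ[ind | mW X]) ω ∂μ := integral_congr_ae hpull
  have hCnn : (0:ℝ) ≤ Real.exp (1 - (t/K)^r) := (Real.exp_pos _).le
  have step2 : ∫ ω, (g * μ[ind | mW X]) ω ∂μ ≤ ∫ ω, g ω * Real.exp (1 - (t/K)^r) ∂μ := by
    refine integral_mono_ae hcond_int (hg_int.mul_const _) ?_
    filter_upwards [htail t ht.le] with ω h1
    exact mul_le_mul_of_nonneg_left h1 (hg0 ω)
  have step3 : ∫ ω, g ω * Real.exp (1 - (t/K)^r) ∂μ ≤ c' * Real.exp (1 - (t/K)^r) := by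
    rw [integral_mul_const]
    exact mul_le_mul_of_nonneg_right hgc hCnn
  have hc'nn : 0 ≤ c' := (integral_nonneg hg0).trans hgc
  have step4 : Real.exp (1 - (t/K)^r) ≤ Real.exp 2 * Real.exp (-(1/K * t)) := by
    rw [← Real.exp_add]
    apply Real.exp_le_exp.mpr
    have hu0 : 0 ≤ t / K := div_nonneg ht.le hK.le
    rcases le_total (t/K) 1 with hu | hu
    · have : (0:ℝ) ≤ (t/K)^r := Real.rpow_nonneg hu0 r
      have ht' : 1/K * t = t/K := by ring
      rw [ht']
      linarith
    · have h1 : t/K = (t/K) ^ (1:ℝ) := (Real.rpow_one _).symm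
      have h2 : (t/K) ^ (1:ℝ) ≤ (t/K)^r := Real.rpow_le_rpow_of_exponent_le hu hr
      have ht' : 1/K * t = t/K := by ring
      rw [ht']
      have h3 : t/K ≤ (t/K)^r := by nth_rewrite 1 [h1]; exact h2
      refine le_trans (sub_le_sub_left h3 1) ?_
      linarith
  calc ∫ ω, g ω * ind ω ∂μ ≤ c' * Real.exp (1 - (t/K)^r) := by
        rw [step1]; exact step2.trans step3
    _ ≤ c' * (Real.exp 2 * Real.exp (-(1/K * t))) :=
        mul_le_mul_of_nonneg_left step4 hc'nn
    _ = c' * Real.exp 2 * Real.exp (-(1/K * t)) := by ring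

lemma per_index_mgf {Ω : Type} [m0 : MeasurableSpace Ω] (μ : Measure Ω)
    [IsProbabilityMeasure μ] (X : Ω → ℝ × ℝ) (hX : Measurable X)
    {K r : ℝ} (hK : 0 < K) (hr : 1 ≤ r)
    (htail : ∀ t : ℝ, 0 ≤ t →
      μ[Set.indicator {ω | t < |(X ω).2|} (fun _ => (1 : ℝ)) |
          MeasurableSpace.comap (fun ω => (X ω).1) inferInstance] ≤ᵐ[μ]
        fun _ => Real.exp (1 - (t / K) ^ r))
    (Bfun : ℝ → ℝ) (hB : Measurable Bfun) (hB01 : ∀ x, 0 ≤ Bfun x ∧ Bfun x ≤ 1)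
    {c : ℝ} (hc : 0 < c) (hBc : ∫ ω, (Bfun (X ω).1) ^ 2 ∂μ ≤ c)
    (E₀ : ℝ) (hE : ∫ ω, Bfun (X ω).1 * (X ω).2 ∂μ = E₀)
    {t : ℝ} (ht : |t| ≤ (2*K)⁻¹) :
    Integrable (fun ω => Real.exp (t * (Bfun (X ω).1 * (X ω).2 - E₀))) μ
    ∧ mgf (fun ω => Bfun (X ω).1 * (X ω).2 - E₀) μ t
        ≤ Real.exp (8 * Real.exp 2 * c * K^2 * t^2) := by
  set s₀ : ℝ := (2*K)⁻¹ with hs₀def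
  have hs₀ : 0 < s₀ := by rw [hs₀def]; positivity
  have hKs : (1:ℝ)/K = s₀ + s₀ := by rw [hs₀def]; field_simp; ring
  have hUm : Measurable (fun ω => |(X ω).2|) := hX.snd.abs
  have hYm : Measurable (fun ω => Bfun (X ω).1 * (X ω).2) := (hB.comp hX.fst).mul hX.snd
  have hB2m : Measurable (fun ω => (Bfun (X ω).1)^2) := (hB.comp hX.fst).pow_const 2
  -- tail bounds
  have hμtail : ∀ τ : ℝ, 0 < τ →
      μ {ω | τ < |(X ω).2|} ≤ ENNReal.ofReal (Real.exp 2 * Real.exp (-(1/K * τ))) := by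
    intro τ hτ
    have hS : MeasurableSet {ω | τ < |(X ω).2|} := measurableSet_lt measurable_const hUm
    have h1 := weighted_tail μ X hX hK hr htail (g := fun _ => (1:ℝ))
      stronglyMeasurable_const (fun _ => zero_le_one) (fun _ => le_rfl) (c' := 1)
      (by simp) τ hτ
    simp only [one_mul] at h1
    have h2 : ∫ ω, Set.indicator {ω | τ < |(X ω).2|} (fun _ => (1:ℝ)) ω ∂μ
        = (μ {ω | τ < |(X ω).2|}).toReal := integral_indicator_one hS
    calc μ {ω | τ < |(X ω).2|}
        = ENNReal.ofReal ((μ {ω | τ < |(X ω).2|}).toReal) :=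
          (ENNReal.ofReal_toReal (measure_ne_top _ _)).symm
      _ ≤ ENNReal.ofReal (Real.exp 2 * Real.exp (-(1/K * τ))) := by
          apply ENNReal.ofReal_le_ofReal
          rw [← h2]
          exact h1
  set ν : Measure Ω := μ.withDensity (fun ω => ENNReal.ofReal ((Bfun (X ω).1)^2)) with hνdef
  have hνtail : ∀ τ : ℝ, 0 < τ →
      ν {ω | τ < |(X ω).2|} ≤ ENNReal.ofReal ((c * Real.exp 2) * Real.exp (-(1/K * τ))) := by
    intro τ hτ
    have hS : MeasurableSet {ω | τ < |(X ω).2|} := measurableSet_lt measurable_const hUm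
    have hWm : Measurable[mW X] (fun ω => (X ω).1) := Measurable.of_comap_le le_rfl
    have hgSM : StronglyMeasurable[mW X] (fun ω => (Bfun (X ω).1)^2) := by
      exact ((hB.comp hWm).pow_const 2).stronglyMeasurable
    have h1 := weighted_tail μ X hX hK hr htail hgSM
      (fun ω => sq_nonneg _)
      (fun ω => by
        have h := hB01 ((X ω).1)
        calc (Bfun (X ω).1)^2 ≤ 1^2 := pow_le_pow_left₀ h.1 h.2 2
          _ = 1 := one_pow 2)
      hBc τ hτ
    have hint : Integrable (fun ω => (Bfun (X ω).1)^2) (μ.restrict {ω | τ < |(X ω).2|}) := by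
      refine (integrable_const (1:ℝ)).mono' hB2m.aestronglyMeasurable ?_
      refine Filter.Eventually.of_forall fun ω => ?_
      have h := hB01 ((X ω).1)
      rw [Real.norm_eq_abs, abs_of_nonneg (sq_nonneg _)]
      calc (Bfun (X ω).1)^2 ≤ 1^2 := pow_le_pow_left₀ h.1 h.2 2
        _ = 1 := one_pow 2
    have h3 : ν {ω | τ < |(X ω).2|}
        = ENNReal.ofReal (∫ ω in {ω | τ < |(X ω).2|}, (Bfun (X ω).1)^2 ∂μ) := by
      rw [hνdef, withDensity_apply _ hS]
      exact (ofReal_integral_eq_lintegral_ofReal hint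
        (Filter.Eventually.of_forall fun ω => sq_nonneg _)).symm
    have h4 : ∫ ω in {ω | τ < |(X ω).2|}, (Bfun (X ω).1)^2 ∂μ
        = ∫ ω, (Bfun (X ω).1)^2
            * Set.indicator {ω | τ < |(X ω).2|} (fun _ => (1:ℝ)) ω ∂μ := by
      rw [← integral_indicator hS]
      congr 1
      funext ω
      by_cases hω : ω ∈ {ω | τ < |(X ω).2|} <;> simp [Set.indicator_apply, hω]
    rw [h3, h4]
    apply ENNReal.ofReal_le_ofReal
    calc ∫ ω, (Bfun (X ω).1)^2
            * Set.indicator {ω | τ < |(X ω).2|} (fun _ => (1:ℝ)) ω ∂μ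
        ≤ c * Real.exp 2 * Real.exp (-(1/K * τ)) := h1
      _ = (c * Real.exp 2) * Real.exp (-(1/K * τ)) := by ring
  -- exponential integrability
  have hmono0 := exp_decay_int s₀ hs₀ 0
  have hmono1 := exp_decay_int s₀ hs₀ 1
  have hmono2 := exp_decay_int s₀ hs₀ 2
  have hfun1 : ∀ τ : ℝ, (s₀ * Real.exp (s₀*τ)) * Real.exp (-(1/K * τ))
      = s₀ * ((τ:ℝ)^(0:ℕ) * Real.exp (-(s₀*τ))) := by
    intro τ
    rw [pow_zero, one_mul, mul_assoc, ← Real.exp_add]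
    congr 2
    rw [hKs]; ring
  have hgcont1 : Continuous (fun τ : ℝ => s₀ * Real.exp (s₀ * τ)) :=
    continuous_const.mul (Real.continuous_exp.comp (continuous_const.mul continuous_id))
  have hgi1 : IntegrableOn (fun τ : ℝ => (s₀ * Real.exp (s₀*τ)) * Real.exp (-(1/K * τ)))
      (Set.Ioi 0) := by
    have : (fun τ : ℝ => (s₀ * Real.exp (s₀*τ)) * Real.exp (-(1/K * τ)))
        = fun τ : ℝ => s₀ * ((τ:ℝ)^(0:ℕ) * Real.exp (-(s₀*τ))) := funext hfun1
    rw [this]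
    exact hmono0.1.const_mul s₀
  have hJ1 : Real.exp 2 * ∫ τ in Set.Ioi (0:ℝ),
      (s₀ * Real.exp (s₀*τ)) * Real.exp (-(1/K * τ)) = Real.exp 2 := by
    have : (fun τ : ℝ => (s₀ * Real.exp (s₀*τ)) * Real.exp (-(1/K * τ)))
        = fun τ : ℝ => s₀ * ((τ:ℝ)^(0:ℕ) * Real.exp (-(s₀*τ))) := funext hfun1
    rw [this, integral_const_mul, hmono0.2]
    field_simp
    simp
  have hlc1 := layercake_exp_tail_bound (ν := μ) hUm (fun ω => abs_nonneg _)
    (C := Real.exp 2) (a := 1/K) (Real.exp_pos 2).le (by positivity) hμtail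
    hgcont1 (fun τ hτ => by positivity) hgi1
  have hExplin : ∫⁻ ω, ENNReal.ofReal (Real.exp (s₀ * |(X ω).2|)) ∂μ
      ≤ ENNReal.ofReal (Real.exp 2 + 1) := by
    have hptw : ∀ ω, ENNReal.ofReal (Real.exp (s₀ * |(X ω).2|))
        = ENNReal.ofReal (∫ τ in (0:ℝ)..(|(X ω).2|), s₀ * Real.exp (s₀*τ)) + 1 := by
      intro ω
      rw [ftc_exp s₀ (|(X ω).2|)]
      rw [← ENNReal.ofReal_one, ← ENNReal.ofReal_add (by
        have : (1:ℝ) ≤ Real.exp (s₀ * |(X ω).2|) := Real.one_le_exp (by positivity)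
        linarith) zero_le_one]
      congr 1
      ring
    calc ∫⁻ ω, ENNReal.ofReal (Real.exp (s₀ * |(X ω).2|)) ∂μ
        = ∫⁻ ω, (ENNReal.ofReal (∫ τ in (0:ℝ)..(|(X ω).2|), s₀ * Real.exp (s₀*τ)) + 1) ∂μ := by
          exact lintegral_congr fun ω => hptw ω
      _ = (∫⁻ ω, ENNReal.ofReal (∫ τ in (0:ℝ)..(|(X ω).2|), s₀ * Real.exp (s₀*τ)) ∂μ) + 1 := by
          rw [lintegral_add_right _ measurable_const, lintegral_const, one_mul, measure_univ]
      _ ≤ ENNReal.ofReal (Real.exp 2 * ∫ τ in Set.Ioi (0:ℝ),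
            (s₀ * Real.exp (s₀*τ)) * Real.exp (-(1/K * τ))) + 1 := by
          exact add_le_add_left hlc1 1
      _ = ENNReal.ofReal (Real.exp 2) + ENNReal.ofReal 1 := by
          rw [hJ1, ENNReal.ofReal_one]
      _ = ENNReal.ofReal (Real.exp 2 + 1) := by
          rw [ENNReal.ofReal_add (Real.exp_pos 2).le zero_le_one]
  have hExp : Integrable (fun ω => Real.exp (s₀ * |(X ω).2|)) μ ∧
      ∫ ω, Real.exp (s₀ * |(X ω).2|) ∂μ ≤ Real.exp 2 + 1 :=
    integrable_and_integral_le ((hUm.const_mul s₀).exp).aestronglyMeasurable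
      (Filter.Eventually.of_forall fun ω => (Real.exp_pos _).le)
      (by positivity) hExplin
  -- the H function
  have hfun2 : ∀ τ : ℝ, ((2*τ + s₀*τ^2) * Real.exp (s₀*τ)) * Real.exp (-(1/K * τ))
      = 2 * ((τ:ℝ)^(1:ℕ) * Real.exp (-(s₀*τ))) + s₀ * ((τ:ℝ)^(2:ℕ) * Real.exp (-(s₀*τ))) := by
    intro τ
    have hexp : Real.exp (s₀*τ) * Real.exp (-(1/K * τ)) = Real.exp (-(s₀*τ)) := by
      rw [← Real.exp_add]; congr 1; rw [hKs]; ring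
    calc ((2*τ + s₀*τ^2) * Real.exp (s₀*τ)) * Real.exp (-(1/K * τ))
        = (2*τ + s₀*τ^2) * (Real.exp (s₀*τ) * Real.exp (-(1/K * τ))) := by ring
      _ = (2*τ + s₀*τ^2) * Real.exp (-(s₀*τ)) := by rw [hexp]
      _ = 2 * ((τ:ℝ)^(1:ℕ) * Real.exp (-(s₀*τ))) + s₀ * ((τ:ℝ)^(2:ℕ) * Real.exp (-(s₀*τ))) := by
          ring
  have hgcont2 : Continuous (fun τ : ℝ => (2*τ + s₀*τ^2) * Real.exp (s₀*τ)) := by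
    refine Continuous.mul ?_ (Real.continuous_exp.comp (continuous_const.mul continuous_id))
    exact (continuous_const.mul continuous_id).add (continuous_const.mul (continuous_pow 2))
  have hgi2 : IntegrableOn
      (fun τ : ℝ => ((2*τ + s₀*τ^2) * Real.exp (s₀*τ)) * Real.exp (-(1/K * τ)))
      (Set.Ioi 0) := by
    have : (fun τ : ℝ => ((2*τ + s₀*τ^2) * Real.exp (s₀*τ)) * Real.exp (-(1/K * τ)))
        = fun τ : ℝ => 2 * ((τ:ℝ)^(1:ℕ) * Real.exp (-(s₀*τ)))
            + s₀ * ((τ:ℝ)^(2:ℕ) * Real.exp (-(s₀*τ))) := funext hfun2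
    rw [this]
    exact (hmono1.1.const_mul 2).add (hmono2.1.const_mul s₀)
  have hJ2 : (c * Real.exp 2) * ∫ τ in Set.Ioi (0:ℝ),
      ((2*τ + s₀*τ^2) * Real.exp (s₀*τ)) * Real.exp (-(1/K * τ))
      = 16 * Real.exp 2 * c * K^2 := by
    have heq : (fun τ : ℝ => ((2*τ + s₀*τ^2) * Real.exp (s₀*τ)) * Real.exp (-(1/K * τ)))
        = fun τ : ℝ => 2 * ((τ:ℝ)^(1:ℕ) * Real.exp (-(s₀*τ)))
            + s₀ * ((τ:ℝ)^(2:ℕ) * Real.exp (-(s₀*τ))) := funext hfun2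
    rw [heq, integral_add (hmono1.1.const_mul 2) (hmono2.1.const_mul s₀),
      integral_const_mul, integral_const_mul, hmono1.2, hmono2.2]
    have : (2:ℝ) * ((Nat.factorial 1 : ℝ) / s₀^(1+1)) + s₀ * ((Nat.factorial 2 : ℝ) / s₀^(2+1))
        = 16 * K^2 := by
      rw [hs₀def]
      simp [Nat.factorial]
      field_simp
      ring
    rw [this]
    ring
  have hlc2 := layercake_exp_tail_bound (ν := ν) hUm (fun ω => abs_nonneg _)
    (C := c * Real.exp 2) (a := 1/K) (by positivity) (by positivity) hνtail
    hgcont2 (fun τ hτ => by positivity) hgi2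
  have hHlin : ∫⁻ ω, ENNReal.ofReal ((Bfun (X ω).1)^2 * ((X ω).2^2 * Real.exp (s₀ * |(X ω).2|))) ∂μ
      ≤ ENNReal.ofReal (16 * Real.exp 2 * c * K^2) := by
    have hfm : Measurable (fun ω => ENNReal.ofReal ((X ω).2^2 * Real.exp (s₀ * |(X ω).2|))) := by
      exact ((hX.snd.pow_const 2).mul (hUm.const_mul s₀).exp).ennreal_ofReal
    have hdm : Measurable (fun ω => ENNReal.ofReal ((Bfun (X ω).1)^2)) := hB2m.ennreal_ofReal
    have hwd : ∫⁻ ω, ENNReal.ofReal ((X ω).2^2 * Real.exp (s₀ * |(X ω).2|)) ∂ν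
        = ∫⁻ ω, ENNReal.ofReal ((Bfun (X ω).1)^2)
            * ENNReal.ofReal ((X ω).2^2 * Real.exp (s₀ * |(X ω).2|)) ∂μ := by
      rw [hνdef, lintegral_withDensity_eq_lintegral_mul μ hdm hfm]
      rfl
    have hptw : ∀ ω, ENNReal.ofReal ((X ω).2^2 * Real.exp (s₀ * |(X ω).2|))
        = ENNReal.ofReal (∫ τ in (0:ℝ)..(|(X ω).2|), (2*τ + s₀*τ^2) * Real.exp (s₀*τ)) := by
      intro ω
      rw [ftc_sq_exp s₀ (|(X ω).2|)]
      congr 1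
      rw [sq_abs]
    calc ∫⁻ ω, ENNReal.ofReal ((Bfun (X ω).1)^2 * ((X ω).2^2 * Real.exp (s₀ * |(X ω).2|))) ∂μ
        = ∫⁻ ω, ENNReal.ofReal ((Bfun (X ω).1)^2)
            * ENNReal.ofReal ((X ω).2^2 * Real.exp (s₀ * |(X ω).2|)) ∂μ := by
          refine lintegral_congr fun ω => ?_
          rw [ENNReal.ofReal_mul (sq_nonneg _)]
      _ = ∫⁻ ω, ENNReal.ofReal ((X ω).2^2 * Real.exp (s₀ * |(X ω).2|)) ∂ν := hwd.symm
      _ = ∫⁻ ω, ENNReal.ofReal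
            (∫ τ in (0:ℝ)..(|(X ω).2|), (2*τ + s₀*τ^2) * Real.exp (s₀*τ)) ∂ν := by
          exact lintegral_congr fun ω => hptw ω
      _ ≤ ENNReal.ofReal ((c * Real.exp 2) * ∫ τ in Set.Ioi (0:ℝ),
            ((2*τ + s₀*τ^2) * Real.exp (s₀*τ)) * Real.exp (-(1/K * τ))) := hlc2
      _ = ENNReal.ofReal (16 * Real.exp 2 * c * K^2) := by rw [hJ2]
  have hH : Integrable (fun ω => (Bfun (X ω).1)^2 * ((X ω).2^2 * Real.exp (s₀ * |(X ω).2|))) μ ∧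
      ∫ ω, (Bfun (X ω).1)^2 * ((X ω).2^2 * Real.exp (s₀ * |(X ω).2|)) ∂μ
        ≤ 16 * Real.exp 2 * c * K^2 := by
    refine integrable_and_integral_le ?_ ?_ (by positivity) hHlin
    · exact (hB2m.mul ((hX.snd.pow_const 2).mul (hUm.const_mul s₀).exp)).aestronglyMeasurable
    · refine Filter.Eventually.of_forall fun ω => ?_
      have := (hB01 ((X ω).1)).1
      positivity
  -- integrability of Y
  have hYbd : ∀ ω, ‖Bfun (X ω).1 * (X ω).2‖ ≤ s₀⁻¹ * Real.exp (s₀ * |(X ω).2|) := by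
    intro ω
    rw [Real.norm_eq_abs, abs_mul, abs_of_nonneg (hB01 _).1]
    have h1 : Bfun (X ω).1 * |(X ω).2| ≤ |(X ω).2| := by
      have := (hB01 ((X ω).1))
      nlinarith [abs_nonneg ((X ω).2)]
    have h2 : s₀ * |(X ω).2| ≤ Real.exp (s₀ * |(X ω).2|) := by
      have := Real.add_one_le_exp (s₀ * |(X ω).2|)
      linarith
    calc Bfun (X ω).1 * |(X ω).2| ≤ |(X ω).2| := h1
      _ ≤ s₀⁻¹ * Real.exp (s₀ * |(X ω).2|) := by
          calc |(X ω).2| = s₀⁻¹ * (s₀ * |(X ω).2|) := by field_simp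
            _ ≤ s₀⁻¹ * Real.exp (s₀ * |(X ω).2|) := by
                refine mul_le_mul_of_nonneg_left ?_ (by positivity)
                have := Real.add_one_le_exp (s₀ * |(X ω).2|)
                linarith
  have hYint : Integrable (fun ω => Bfun (X ω).1 * (X ω).2) μ := by
    refine (hExp.1.const_mul s₀⁻¹).mono' hYm.aestronglyMeasurable ?_
    exact Filter.Eventually.of_forall hYbd
  -- pointwise bound on exp(t * Y)
  have htY : ∀ ω, |t * (Bfun (X ω).1 * (X ω).2)| ≤ s₀ * |(X ω).2| := by
    intro ω
    rw [abs_mul, abs_mul, abs_of_nonneg (hB01 _).1]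
    calc |t| * (Bfun (X ω).1 * |(X ω).2|) ≤ s₀ * (1 * |(X ω).2|) := by
          refine mul_le_mul ht ?_ (mul_nonneg (hB01 _).1 (abs_nonneg _)) hs₀.le
          refine mul_le_mul_of_nonneg_right (hB01 _).2 (abs_nonneg _)
      _ = s₀ * |(X ω).2| := by ring
  have hexpY : Integrable (fun ω => Real.exp (t * (Bfun (X ω).1 * (X ω).2))) μ := by
    refine hExp.1.mono' ((hYm.const_mul t).exp).aestronglyMeasurable ?_
    refine Filter.Eventually.of_forall fun ω => ?_
    rw [Real.norm_eq_abs, abs_of_nonneg (Real.exp_pos _).le, Real.exp_le_exp]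
    exact (le_abs_self _).trans (htY ω)
  -- part (a)
  have hsplit : ∀ ω, Real.exp (t * (Bfun (X ω).1 * (X ω).2 - E₀))
      = Real.exp (t * (Bfun (X ω).1 * (X ω).2)) * Real.exp (-(t * E₀)) := by
    intro ω
    rw [← Real.exp_add]
    congr 1
    ring
  have ha : Integrable (fun ω => Real.exp (t * (Bfun (X ω).1 * (X ω).2 - E₀))) μ := by
    have : (fun ω => Real.exp (t * (Bfun (X ω).1 * (X ω).2 - E₀)))
        = fun ω => Real.exp (t * (Bfun (X ω).1 * (X ω).2)) * Real.exp (-(t * E₀)) :=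
      funext hsplit
    rw [this]
    exact hexpY.mul_const _
  refine ⟨ha, ?_⟩
  -- part (b)
  have hmgf_int : ∫ ω, Real.exp (t * (Bfun (X ω).1 * (X ω).2)) ∂μ
      ≤ 1 + t * E₀ + 8 * Real.exp 2 * c * K^2 * t^2 := by
    have hptw : ∀ ω, Real.exp (t * (Bfun (X ω).1 * (X ω).2))
        ≤ 1 + t * (Bfun (X ω).1 * (X ω).2)
          + t^2/2 * ((Bfun (X ω).1)^2 * ((X ω).2^2 * Real.exp (s₀ * |(X ω).2|))) := by
      intro ω
      have h1 := exp_le_one_add_add (t * (Bfun (X ω).1 * (X ω).2))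
      have h2 : (t * (Bfun (X ω).1 * (X ω).2))^2 / 2
            * Real.exp |t * (Bfun (X ω).1 * (X ω).2)|
          ≤ t^2/2 * ((Bfun (X ω).1)^2 * ((X ω).2^2 * Real.exp (s₀ * |(X ω).2|))) := by
        have h3 : Real.exp |t * (Bfun (X ω).1 * (X ω).2)| ≤ Real.exp (s₀ * |(X ω).2|) :=
          Real.exp_le_exp.mpr (htY ω)
        have h4 : (t * (Bfun (X ω).1 * (X ω).2))^2 / 2
            = t^2/2 * ((Bfun (X ω).1)^2 * (X ω).2^2) := by ring
        rw [h4]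
        calc t^2/2 * ((Bfun (X ω).1)^2 * (X ω).2^2)
              * Real.exp |t * (Bfun (X ω).1 * (X ω).2)|
            ≤ t^2/2 * ((Bfun (X ω).1)^2 * (X ω).2^2) * Real.exp (s₀ * |(X ω).2|) := by
              refine mul_le_mul_of_nonneg_left h3 ?_
              have := (hB01 ((X ω).1)).1
              positivity
          _ = t^2/2 * ((Bfun (X ω).1)^2 * ((X ω).2^2 * Real.exp (s₀ * |(X ω).2|))) := by ring
      linarith
    have hi1 : Integrable (fun ω => 1 + t * (Bfun (X ω).1 * (X ω).2)) μ := by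
      exact (integrable_const 1).add (hYint.const_mul t)
    have hint2 : Integrable (fun ω => 1 + t * (Bfun (X ω).1 * (X ω).2)
        + t^2/2 * ((Bfun (X ω).1)^2 * ((X ω).2^2 * Real.exp (s₀ * |(X ω).2|)))) μ := by
      exact hi1.add (hH.1.const_mul (t^2/2))
    calc ∫ ω, Real.exp (t * (Bfun (X ω).1 * (X ω).2)) ∂μ
        ≤ ∫ ω, (1 + t * (Bfun (X ω).1 * (X ω).2)
            + t^2/2 * ((Bfun (X ω).1)^2 * ((X ω).2^2 * Real.exp (s₀ * |(X ω).2|)))) ∂μ :=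
          integral_mono hexpY hint2 hptw
      _ = 1 + t * E₀ + t^2/2 * ∫ ω, (Bfun (X ω).1)^2
            * ((X ω).2^2 * Real.exp (s₀ * |(X ω).2|)) ∂μ := by
          rw [integral_add hi1 (hH.1.const_mul (t^2/2)),
            integral_add (integrable_const 1) (hYint.const_mul t),
            integral_const, integral_const_mul, integral_const_mul, hE]
          simp [measure_univ]
      _ ≤ 1 + t * E₀ + t^2/2 * (16 * Real.exp 2 * c * K^2) := by
          have h5 : (0:ℝ) ≤ t^2/2 := by positivity
          nlinarith [hH.2]
      _ = 1 + t * E₀ + 8 * Real.exp 2 * c * K^2 * t^2 := by ring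
  have hmgf : mgf (fun ω => Bfun (X ω).1 * (X ω).2 - E₀) μ t
      = (∫ ω, Real.exp (t * (Bfun (X ω).1 * (X ω).2)) ∂μ) * Real.exp (-(t * E₀)) := by
    unfold mgf
    calc ∫ ω, Real.exp (t * (Bfun (X ω).1 * (X ω).2 - E₀)) ∂μ
        = ∫ ω, Real.exp (t * (Bfun (X ω).1 * (X ω).2)) * Real.exp (-(t * E₀)) ∂μ :=
          integral_congr_ae (Filter.Eventually.of_forall hsplit)
      _ = (∫ ω, Real.exp (t * (Bfun (X ω).1 * (X ω).2)) ∂μ) * Real.exp (-(t * E₀)) :=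
          integral_mul_const _ _
  rw [hmgf]
  calc (∫ ω, Real.exp (t * (Bfun (X ω).1 * (X ω).2)) ∂μ) * Real.exp (-(t * E₀))
      ≤ (1 + t * E₀ + 8 * Real.exp 2 * c * K^2 * t^2) * Real.exp (-(t * E₀)) :=
        mul_le_mul_of_nonneg_right hmgf_int (Real.exp_pos _).le
    _ ≤ Real.exp (t * E₀ + 8 * Real.exp 2 * c * K^2 * t^2) * Real.exp (-(t * E₀)) := by
        refine mul_le_mul_of_nonneg_right ?_ (Real.exp_pos _).le
        have := Real.add_one_le_exp (t * E₀ + 8 * Real.exp 2 * c * K^2 * t^2)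
        linarith
    _ = Real.exp (8 * Real.exp 2 * c * K^2 * t^2) := by
        rw [← Real.exp_add]
        congr 1
        ring

/-- Core concentration bound of Lemma 5: there exist constants `b₁, b₂ > 0`
depending only on `K` and `r` such that for i.i.d. pairs `(Wᵢ, Uᵢ)` whose second
coordinate has a conditional exponential tail with parameters `(K, r)` given the
first, and any measurable `B` with `0 ≤ B ≤ 1` and `E[B(W₁)²] ≤ c`, the centered
sum `Σᵢ (B(Wᵢ)Uᵢ - E[B(W₁)U₁])` satisfies a Bernstein-type tail bound
`P(|Σ| ≥ δ) ≤ 2 exp (-δ²/(b₁ c n + b₂ δ))`. -/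
theorem bernstein_concentration_spline_product :
    ∀ K r : ℝ, 0 < K → 1 ≤ r →
      ∃ b₁ : ℝ, 0 < b₁ ∧ ∃ b₂ : ℝ, 0 < b₂ ∧
        ∀ (Ω : Type) [MeasurableSpace Ω] (μ : Measure Ω) [IsProbabilityMeasure μ]
          (n : ℕ) (hn : 0 < n) (V : Fin n → Ω → ℝ × ℝ),
          (∀ i, Measurable (V i)) →
          iIndepFun V μ →
          (∀ i j, μ.map (V i) = μ.map (V j)) →
          (∀ i, ∀ t : ℝ, 0 ≤ t →
            μ[Set.indicator {ω | t < |(V i ω).2|} (fun _ => (1 : ℝ)) |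
                MeasurableSpace.comap (fun ω => (V i ω).1) inferInstance] ≤ᵐ[μ]
              fun _ => Real.exp (1 - (t / K) ^ r)) →
          ∀ Bfun : ℝ → ℝ, Measurable Bfun → (∀ x, 0 ≤ Bfun x ∧ Bfun x ≤ 1) →
          ∀ c : ℝ, 0 < c →
          (∀ i, ∫ ω, Bfun ((V i ω).1) ^ 2 ∂μ ≤ c) →
          ∀ δ : ℝ, 0 < δ →
            (μ {ω | δ ≤ |∑ i, (Bfun ((V i ω).1) * (V i ω).2 -
                ∫ ω', Bfun ((V ⟨0, hn⟩ ω').1) * (V ⟨0, hn⟩ ω').2 ∂μ)|}).toReal ≤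
              2 * Real.exp (-δ ^ 2 / (b₁ * c * n + b₂ * δ)) := by
  intro K r hK hr
  refine ⟨32 * Real.exp 2 * K^2, by positivity, 4*K, by positivity, ?_⟩
  intro Ω m0 μ instPM n hn V hVmeas hVindep hmap htail Bfun hBmeas hB01 c hc hBint δ hδ
  set E₀ : ℝ := ∫ ω', Bfun ((V ⟨0, hn⟩ ω').1) * (V ⟨0, hn⟩ ω').2 ∂μ with hE₀def
  have hfmeas : Measurable (fun p : ℝ × ℝ => Bfun p.1 * p.2) :=
    (hBmeas.comp measurable_fst).mul measurable_snd
  have hEeq : ∀ i, ∫ ω, Bfun ((V i ω).1) * (V i ω).2 ∂μ = E₀ := by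
    intro i
    have h1 : ∀ j : Fin n, ∫ ω, Bfun ((V j ω).1) * (V j ω).2 ∂μ
        = ∫ p, Bfun p.1 * p.2 ∂(μ.map (V j)) := by
      intro j
      rw [integral_map (hVmeas j).aemeasurable hfmeas.aestronglyMeasurable]
    rw [hE₀def, h1 i, h1 ⟨0, hn⟩, hmap i ⟨0, hn⟩]
  set Z : Fin n → Ω → ℝ := fun i ω => Bfun ((V i ω).1) * (V i ω).2 - E₀ with hZdef
  have hZmeas : ∀ i, Measurable (Z i) := fun i =>
    ((hBmeas.comp (hVmeas i).fst).mul (hVmeas i).snd).sub measurable_const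
  have hZindep : iIndepFun Z μ := by
    have := hVindep.comp (fun _ (p : ℝ × ℝ) => Bfun p.1 * p.2 - E₀)
      (fun _ => hfmeas.sub measurable_const)
    exact this
  set a : ℝ := 8 * Real.exp 2 * c * K^2 with hadef
  have hapos : 0 < a := by rw [hadef]; positivity
  have hpi : ∀ i : Fin n, ∀ t : ℝ, |t| ≤ (2*K)⁻¹ →
      Integrable (fun ω => Real.exp (t * Z i ω)) μ ∧ mgf (Z i) μ t ≤ Real.exp (a * t^2) := by
    intro i t ht'
    exact per_index_mgf μ (V i) (hVmeas i) hK hr (htail i) Bfun hBmeas hB01 hc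
      (hBint i) E₀ (hEeq i) ht'
  have hnpos : (0:ℝ) < n := by exact_mod_cast hn
  set A : ℝ := n * a with hAdef
  have hApos : 0 < A := by rw [hAdef]; positivity
  have hmgfS : ∀ t : ℝ, |t| ≤ (2*K)⁻¹ → mgf (∑ i, Z i) μ t ≤ Real.exp (A * t^2) := by
    intro t ht'
    rw [hZindep.mgf_sum hZmeas Finset.univ]
    calc ∏ i, mgf (Z i) μ t ≤ ∏ _i : Fin n, Real.exp (a * t^2) :=
          Finset.prod_le_prod (fun i _ => mgf_nonneg) (fun i _ => (hpi i t ht').2)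
      _ = Real.exp (a * t^2) ^ n := by
          rw [Finset.prod_const, Finset.card_univ, Fintype.card_fin]
      _ = Real.exp (A * t^2) := by
          rw [← Real.exp_nat_mul, hAdef]; ring_nf
  have hSint : ∀ t : ℝ, |t| ≤ (2*K)⁻¹ →
      Integrable (fun ω => Real.exp (t * (∑ i, Z i) ω)) μ := by
    intro t ht'
    exact hZindep.integrable_exp_mul_sum hZmeas (fun i _ => (hpi i t ht').1)
  -- choose the optimal t
  set s₀ : ℝ := (2*K)⁻¹ with hs₀def
  have hs₀ : 0 < s₀ := by rw [hs₀def]; positivity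
  set t : ℝ := min (δ/(2*A)) s₀ with htdef
  have ht0 : 0 < t := lt_min (by positivity) hs₀
  have hts : t ≤ s₀ := min_le_right _ _
  have htabs : |t| ≤ (2*K)⁻¹ := by rw [abs_of_pos ht0]; exact hts
  have htabs' : |(-t)| ≤ (2*K)⁻¹ := by rw [abs_neg]; exact htabs
  -- Chernoff bounds
  have hup : (μ {ω | δ ≤ (∑ i, Z i) ω}).toReal
      ≤ Real.exp (-(t*δ) + A * t^2) := by
    calc (μ {ω | δ ≤ (∑ i, Z i) ω}).toReal
        ≤ Real.exp (-t * δ) * mgf (∑ i, Z i) μ t :=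
          measure_ge_le_exp_mul_mgf δ ht0.le (hSint t htabs)
      _ ≤ Real.exp (-t * δ) * Real.exp (A * t^2) :=
          mul_le_mul_of_nonneg_left (hmgfS t htabs) (Real.exp_pos _).le
      _ = Real.exp (-(t*δ) + A * t^2) := by rw [← Real.exp_add]; ring_nf
  have hdown : (μ {ω | (∑ i, Z i) ω ≤ -δ}).toReal
      ≤ Real.exp (-(t*δ) + A * t^2) := by
    calc (μ {ω | (∑ i, Z i) ω ≤ -δ}).toReal
        ≤ Real.exp (-(-t) * (-δ)) * mgf (∑ i, Z i) μ (-t) :=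
          measure_le_le_exp_mul_mgf (-δ) (neg_nonpos.mpr ht0.le) (hSint (-t) htabs')
      _ ≤ Real.exp (-(-t) * (-δ)) * Real.exp (A * (-t)^2) :=
          mul_le_mul_of_nonneg_left (hmgfS (-t) htabs') (Real.exp_pos _).le
      _ = Real.exp (-(t*δ) + A * t^2) := by rw [← Real.exp_add]; ring_nf
  -- combine
  have hset : {ω | δ ≤ |∑ i, (Bfun ((V i ω).1) * (V i ω).2 - E₀)|}
      ⊆ {ω | δ ≤ (∑ i, Z i) ω} ∪ {ω | (∑ i, Z i) ω ≤ -δ} := by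
    intro ω hω
    simp only [Set.mem_setOf_eq] at hω
    have hsum : (∑ i, Z i) ω = ∑ i, (Bfun ((V i ω).1) * (V i ω).2 - E₀) := by
      rw [Finset.sum_apply]
    rcases le_abs.mp hω with h | h
    · left; rw [Set.mem_setOf_eq, hsum]; exact h
    · right; rw [Set.mem_setOf_eq, hsum]; linarith
  have hcomb : (μ {ω | δ ≤ |∑ i, (Bfun ((V i ω).1) * (V i ω).2 - E₀)|}).toReal
      ≤ 2 * Real.exp (-(t*δ) + A * t^2) := by
    have h1 : μ {ω | δ ≤ |∑ i, (Bfun ((V i ω).1) * (V i ω).2 - E₀)|}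
        ≤ μ {ω | δ ≤ (∑ i, Z i) ω} + μ {ω | (∑ i, Z i) ω ≤ -δ} :=
      (measure_mono hset).trans (measure_union_le _ _)
    have h2 : (μ {ω | δ ≤ |∑ i, (Bfun ((V i ω).1) * (V i ω).2 - E₀)|}).toReal
        ≤ (μ {ω | δ ≤ (∑ i, Z i) ω}).toReal + (μ {ω | (∑ i, Z i) ω ≤ -δ}).toReal := by
      rw [← ENNReal.toReal_add (measure_ne_top _ _) (measure_ne_top _ _)]
      exact ENNReal.toReal_mono (by
        exact ENNReal.add_ne_top.mpr ⟨measure_ne_top _ _, measure_ne_top _ _⟩) h1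
    calc (μ {ω | δ ≤ |∑ i, (Bfun ((V i ω).1) * (V i ω).2 - E₀)|}).toReal
        ≤ (μ {ω | δ ≤ (∑ i, Z i) ω}).toReal + (μ {ω | (∑ i, Z i) ω ≤ -δ}).toReal := h2
      _ ≤ 2 * Real.exp (-(t*δ) + A * t^2) := by linarith [hup, hdown]
  -- the optimization
  have hb1 : 32 * Real.exp 2 * K^2 * c * (n:ℝ) = 4 * A := by
    rw [hAdef, hadef]; ring
  have hopt : -(t*δ) + A * t^2 ≤ -δ^2 / (32 * Real.exp 2 * K^2 * c * n + 4*K*δ) := by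
    have hden : 0 < 32 * Real.exp 2 * K^2 * c * (n:ℝ) + 4*K*δ := by positivity
    rcases min_cases (δ/(2*A)) s₀ with ⟨heq, hle⟩ | ⟨heq, hle⟩
    · -- t = δ/(2A)
      have ht' : t = δ/(2*A) := heq
      have hval : -(t*δ) + A * t^2 = -(δ^2/(4*A)) := by
        rw [ht']; field_simp; ring
      rw [hval, neg_div]
      apply neg_le_neg
      have h4A : (0:ℝ) < 4*A := by positivity
      apply div_le_div_of_nonneg_left (sq_nonneg δ) h4A
      rw [← hb1]
      nlinarith [hδ, hK]
    · -- t = s₀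
      have ht' : t = s₀ := heq
      have hle' : s₀ ≤ δ/(2*A) := hle.le
      have hle2 : s₀ * (2*A) ≤ δ := by
        rw [le_div_iff₀ (by positivity)] at hle'
        exact hle'
      have hAs2 : A * s₀ ≤ δ/2 := by linarith
      have hstep1 : -(t*δ) + A * t^2 ≤ -(s₀*δ/2) := by
        rw [ht']
        have h3 : A * s₀^2 ≤ (δ/2) * s₀ := by
          have := mul_le_mul_of_nonneg_right hAs2 hs₀.le
          calc A * s₀^2 = A * s₀ * s₀ := by ring
            _ ≤ (δ/2) * s₀ := this
        linarith
      have hstep2 : s₀*δ/2 = δ/(4*K) := by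
        rw [hs₀def, eq_div_iff (by positivity : (4:ℝ)*K ≠ 0)]
        field_simp
        norm_num
      have hstep3 : -(δ/(4*K)) ≤ -δ^2 / (32 * Real.exp 2 * K^2 * c * n + 4*K*δ) := by
        rw [neg_div]
        apply neg_le_neg
        rw [div_le_div_iff₀ hden (by positivity)]
        have hpos1 : 0 < δ * (32 * Real.exp 2 * K^2 * c * (n:ℝ)) := by positivity
        nlinarith [hpos1]
      calc -(t*δ) + A * t^2 ≤ -(s₀*δ/2) := hstep1
        _ = -(δ/(4*K)) := by rw [hstep2]
        _ ≤ -δ^2 / (32 * Real.exp 2 * K^2 * c * n + 4*K*δ) := hstep3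
  calc (μ {ω | δ ≤ |∑ i, (Bfun ((V i ω).1) * (V i ω).2 - E₀)|}).toReal
      ≤ 2 * Real.exp (-(t*δ) + A * t^2) := hcomb
    _ ≤ 2 * Real.exp (-δ^2 / (32 * Real.exp 2 * K^2 * c * n + 4*K*δ)) := by
        have := Real.exp_le_exp.mpr hopt
        linarith
    _ = 2 * Real.exp (-δ^2 / (32 * Real.exp 2 * K^2 * c * n + 4*K*δ)) := rfl
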